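/- With G = C_m ≀ S_n acting diagonally on P_n^{⊗t} and the symmetrization map π(x̄^f) = Σ_{g∈G} φ_D(g)(x̄^f), let f, h be exponent arrays with Σ_i f_i(j) ≡ 0 ≡ Σ_i h_i(j) (mod m) for all j. Then the following are equivalent: (i) the supports (sets of monomials with nonzero coefficient) of π(x̄^f) and π(x̄^h) intersect; (ii) π(x̄^f) = π(x̄^h); (iii) there exists σ ∈ S_n with h_i(j) = f_i(σ(j)) for all i, j. -/

import Mathlib

open Finset

@[ext]
structure GenPerm (m n : ℕ) where
  σ : Equiv.Perm (Fin n)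
  c : Fin n → ZMod m
deriving DecidableEq

namespace GenPerm

variable {m n : ℕ}

instance [NeZero m] : Fintype (GenPerm m n) :=
  Fintype.ofEquiv (Equiv.Perm (Fin n) × (Fin n → ZMod m))
    { toFun := fun p => ⟨p.1, p.2⟩
      invFun := fun g => (g.σ, g.c)
      left_inv := fun p => rfl
      right_inv := fun g => rfl }

instance : Mul (GenPerm m n) := ⟨fun g h => ⟨g.σ * h.σ, fun j => g.c (h.σ j) + h.c j⟩⟩
instance : One (GenPerm m n) := ⟨⟨1, 0⟩⟩
instance : Inv (GenPerm m n) := ⟨fun g => ⟨g.σ⁻¹, fun j => - g.c (g.σ⁻¹ j)⟩⟩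

@[simp] lemma mul_σ (g h : GenPerm m n) : (g * h).σ = g.σ * h.σ := rfl
@[simp] lemma mul_c (g h : GenPerm m n) (j : Fin n) : (g * h).c j = g.c (h.σ j) + h.c j := rfl
@[simp] lemma one_σ : (1 : GenPerm m n).σ = 1 := rfl
@[simp] lemma one_c (j : Fin n) : (1 : GenPerm m n).c j = 0 := rfl
@[simp] lemma inv_σ (g : GenPerm m n) : (g⁻¹).σ = g.σ⁻¹ := rfl
@[simp] lemma inv_c (g : GenPerm m n) (j : Fin n) : (g⁻¹).c j = - g.c (g.σ⁻¹ j) := rfl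

instance : Group (GenPerm m n) where
  mul_assoc a b c := by
    ext j
    · simp [mul_assoc]
    · simp [add_assoc]
  one_mul a := by
    ext j
    · simp
    · simp
  mul_one a := by
    ext j
    · simp
    · simp
  inv_mul_cancel a := by
    ext j
    · simp
    · simp

/-- The generator `s i`: `s 0` multiplies the first letter's phase by `ω`;
for `1 ≤ i < n`, `s i` swaps positions `i` and `i+1` (1-indexed), i.e. `i-1` and `i`
(0-indexed). -/
def s (i : ℕ) : GenPerm m n :=
  if h : i < n then
    if h0 : i = 0 then ⟨1, fun j => if j = ⟨0, by omega⟩ then 1 else 0⟩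
    else ⟨Equiv.swap ⟨i - 1, by omega⟩ ⟨i, h⟩, 0⟩
  else 1

/-- `t i = s i * s (i-1) * ⋯ * s 1 * s 0`. -/
def t (i : ℕ) : GenPerm m n := ((List.range (i + 1)).map (fun j => (s (i - j) : GenPerm m n))).prod

/-- `rep k = t (n-1) ^ k (n-1) * ⋯ * t 0 ^ k 0`. -/
def rep (k : Fin n → ℕ) : GenPerm m n :=
  (List.ofFn (fun i : Fin n => (t (i : ℕ) : GenPerm m n) ^ k i)).reverse.prod

open scoped Classical in
/-- The flag major index: the sum of the exponents in the canonical representation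
`π = t (n-1) ^ k (n-1) * ⋯ * t 0 ^ k 0` with `0 ≤ k i < m * (i+1)`. -/
noncomputable def flagMajor (π : GenPerm m n) : ℕ :=
  if h : ∃ k : Fin n → ℕ, (∀ i : Fin n, k i < m * ((i : ℕ) + 1)) ∧ π = rep k
  then ∑ i, h.choose i else 0

/-- The major index of a generalized permutation with respect to the linear order
`1·ω^{m-1} < ⋯ < n·ω^{m-1} < ⋯ < 1·ω < ⋯ < n·ω < 1 < ⋯ < n`
(a 1-indexed descent at position `i` contributes `i`). -/
def majG (π : GenPerm m n) : ℕ :=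
  ∑ i ∈ Finset.range n, if h : i + 1 < n then
    (if (π.c ⟨i, by omega⟩).val < (π.c ⟨i + 1, h⟩).val ∨
        (π.c ⟨i, by omega⟩ = π.c ⟨i + 1, h⟩ ∧ π.σ ⟨i + 1, h⟩ < π.σ ⟨i, by omega⟩)
     then i + 1 else 0) else 0

/-- Coxeter length with respect to the generators `s 0, s 1, …, s (n-1)`. -/
noncomputable def len (π : GenPerm m n) : ℕ :=
  sInf {l | ∃ w : List (Fin n), w.length = l ∧ (w.map (fun i => (s (i : ℕ) : GenPerm m n))).prod = π}


/-- `ω = exp(2πi/m)`. -/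
noncomputable def omegaC (m : ℕ) : ℂ := Complex.exp (2 * Real.pi * Complex.I / m)

/-- The image of the monomial `x̄^f ∈ P_n^{⊗t}` under the diagonal action of
`g ∈ C_m ≀ S_n` (which maps `x_{i,j} ↦ ω^{c_g(j)} x_{i, σ_g(j)}` in each tensor
factor `i`). -/
noncomputable def diagMono {m n t : ℕ} (g : GenPerm m n) (f : Fin t × Fin n → ℕ) :
    MvPolynomial (Fin t × Fin n) ℂ :=
  MvPolynomial.monomial (Finsupp.equivFunOnFinite.symm (fun p => f (p.1, g.σ⁻¹ p.2)))
    (omegaC m ^ (∑ p : Fin t × Fin n, (g.c p.2).val * f p))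

/-- The symmetrization `π(x̄^f) = Σ_{g ∈ G} φ_D(g)(x̄^f)`. -/
noncomputable def symmF (m n t : ℕ) [NeZero m] (f : Fin t × Fin n → ℕ) :
    MvPolynomial (Fin t × Fin n) ℂ :=
  ∑ g : GenPerm m n, diagMono g f

open scoped Classical

/-- The exponent finsupp of the monomial obtained by permuting columns of `f` by `σ`. -/
noncomputable def Ffun {tc n : ℕ} (f : Fin tc × Fin n → ℕ) (σ : Equiv.Perm (Fin n)) :
    (Fin tc × Fin n) →₀ ℕ :=
  Finsupp.equivFunOnFinite.symm (fun p => f (p.1, σ⁻¹ p.2))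

lemma omegaC_pow_self {m : ℕ} [NeZero m] : omegaC m ^ m = 1 := by
  have hm : (m : ℂ) ≠ 0 := Nat.cast_ne_zero.mpr (NeZero.ne m)
  rw [omegaC, ← Complex.exp_nat_mul,
    show (m : ℂ) * (2 * Real.pi * Complex.I / m) = 2 * Real.pi * Complex.I by
      field_simp]
  exact Complex.exp_two_pi_mul_I

lemma diagMono_eq {m n tc : ℕ} [NeZero m] (f : Fin tc × Fin n → ℕ)
    (hf : ∀ j : Fin n, (∑ i : Fin tc, f (i, j)) % m = 0) (g : GenPerm m n) :
    diagMono g f = MvPolynomial.monomial (Ffun f g.σ) 1 := by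
  unfold diagMono Ffun
  congr 1
  have hdvd : m ∣ ∑ p : Fin tc × Fin n, (g.c p.2).val * f p := by
    rw [Fintype.sum_prod_type]
    rw [Finset.sum_comm]
    apply Finset.dvd_sum
    intro j _
    have : ∑ i : Fin tc, (g.c j).val * f (i, j) = (g.c j).val * ∑ i : Fin tc, f (i, j) := by
      rw [Finset.mul_sum]
    rw [this]
    exact Dvd.dvd.mul_left (Nat.dvd_of_mod_eq_zero (hf j)) _
  obtain ⟨k, hk⟩ := hdvd
  rw [hk, pow_mul, omegaC_pow_self, one_pow]

lemma symmF_eq {m n tc : ℕ} [NeZero m] (f : Fin tc × Fin n → ℕ)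
    (hf : ∀ j : Fin n, (∑ i : Fin tc, f (i, j)) % m = 0) :
    symmF m n tc f = ∑ g : GenPerm m n, MvPolynomial.monomial (Ffun f g.σ) 1 :=
  Finset.sum_congr rfl fun g _ => diagMono_eq f hf g

lemma mem_support_symmF {m n tc : ℕ} [NeZero m] (f : Fin tc × Fin n → ℕ)
    (hf : ∀ j : Fin n, (∑ i : Fin tc, f (i, j)) % m = 0) (d : (Fin tc × Fin n) →₀ ℕ) :
    d ∈ (symmF m n tc f).support ↔ ∃ σ : Equiv.Perm (Fin n), Ffun f σ = d := by
  rw [MvPolynomial.mem_support_iff, symmF_eq f hf, MvPolynomial.coeff_sum]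
  have : ∀ g : GenPerm m n,
      MvPolynomial.coeff d (MvPolynomial.monomial (Ffun f g.σ) (1 : ℂ)) =
        if Ffun f g.σ = d then 1 else 0 := fun g => MvPolynomial.coeff_monomial d _ 1
  rw [Finset.sum_congr rfl fun g _ => this g, Finset.sum_boole]
  rw [Ne, Nat.cast_eq_zero, Finset.card_eq_zero, ← Ne, ← Finset.nonempty_iff_ne_empty]
  constructor
  · rintro ⟨g, hg⟩
    rw [Finset.mem_filter] at hg
    exact ⟨g.σ, hg.2⟩
  · rintro ⟨σ, hσ⟩
    exact ⟨⟨σ, 0⟩, Finset.mem_filter.mpr ⟨Finset.mem_univ _, hσ⟩⟩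

/-- for exponent arrays `f, h` with all column sums `≡ 0 (mod m)`,
the supports of `π(x̄^f)` and `π(x̄^h)` intersect iff `π(x̄^f) = π(x̄^h)` iff `h` is
obtained from `f` by permuting columns. -/
theorem symmF_support_trichotomy (m n t : ℕ) [NeZero m] (f h : Fin t × Fin n → ℕ)
    (hf : ∀ j : Fin n, (∑ i : Fin t, f (i, j)) % m = 0)
    (hh : ∀ j : Fin n, (∑ i : Fin t, h (i, j)) % m = 0) :
    (((symmF m n t f).support ∩ (symmF m n t h).support).Nonempty ↔
        symmF m n t f = symmF m n t h) ∧
    (symmF m n t f = symmF m n t h ↔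
        ∃ σ : Equiv.Perm (Fin n), ∀ (i : Fin t) (j : Fin n), h (i, j) = f (i, σ j)) := by
  have key2 : (∃ σ : Equiv.Perm (Fin n), ∀ (i : Fin t) (j : Fin n), h (i, j) = f (i, σ j)) →
      symmF m n t f = symmF m n t h := by
    rintro ⟨σ, hσ⟩
    rw [symmF_eq f hf, symmF_eq h hh]
    refine Fintype.sum_equiv
      (⟨fun g => ⟨g.σ * σ, g.c⟩, fun g => ⟨g.σ * σ⁻¹, g.c⟩,
        fun g => by ext <;> simp [mul_assoc], fun g => by ext <;> simp [mul_assoc]⟩ :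
        GenPerm m n ≃ GenPerm m n) _ _ (fun g => ?_)
    show (MvPolynomial.monomial (Ffun f g.σ)) (1 : ℂ) =
      MvPolynomial.monomial (Ffun h (g.σ * σ)) 1
    have hF : Ffun h (g.σ * σ) = Ffun f g.σ := by
      unfold Ffun
      apply congrArg
      funext p
      simp only [mul_inv_rev, Equiv.Perm.mul_apply]
      rw [hσ p.1 (σ⁻¹ (g.σ⁻¹ p.2)), Equiv.Perm.coe_inv, Equiv.apply_symm_apply]
    rw [hF]
  have key3 : ((symmF m n t f).support ∩ (symmF m n t h).support).Nonempty →
      ∃ σ : Equiv.Perm (Fin n), ∀ (i : Fin t) (j : Fin n), h (i, j) = f (i, σ j) := by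
    rintro ⟨d, hd⟩
    rw [Finset.mem_inter, mem_support_symmF f hf, mem_support_symmF h hh] at hd
    obtain ⟨⟨σ₁, h1⟩, ⟨σ₂, h2⟩⟩ := hd
    have := Finsupp.equivFunOnFinite.symm.injective (h1.trans h2.symm)
    refine ⟨σ₁⁻¹ * σ₂, fun i j => ?_⟩
    have h3 := congrFun this (i, σ₂ j)
    simp only [Equiv.Perm.coe_inv, Equiv.symm_apply_apply] at h3
    rw [← h3]
    rfl
  have key1 : symmF m n t f = symmF m n t h →
      ((symmF m n t f).support ∩ (symmF m n t h).support).Nonempty := by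
    intro he
    refine ⟨Ffun f 1, Finset.mem_inter.mpr ⟨(mem_support_symmF f hf _).mpr ⟨1, rfl⟩, ?_⟩⟩
    rw [← he]
    exact (mem_support_symmF f hf _).mpr ⟨1, rfl⟩
  exact ⟨⟨fun hi => key2 (key3 hi), key1⟩, ⟨fun he => key3 (key1 he), key2⟩⟩

end GenPerm
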